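/- Let G be a 2-connected graph, v a vertex of G, and (E₁, E₂) a partition of the edges incident to v into two nonempty parts. Let G′ be obtained from G by splitting v into two vertices v₁ and v₂, where vᵢ keeps the edges of Eᵢ. Then the block structure of G′ is a chain: its 2-connected components can be ordered B₁,…,B_k so that each Bᵢ has two distinguished distinct vertices wᵢ, wᵢ′ with w₁ = v₁, w_k′ = v₂, and wᵢ′ = w_{i+1} for all 1 ≤ i ≤ k−1, the cut vertices of G′ being exactly the vertices w₂,…,w_k. -/

import Mathlib

open SimpleGraph

/-- `G` is 2-connected: at least 3 vertices, and removing any single vertex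
leaves a connected graph. -/
def TwoConnectedGraph {V : Type*} (G : SimpleGraph V) : Prop :=
  3 ≤ Nat.card V ∧ G.Connected ∧
    ∀ v : V, (G.induce {w : V | w ≠ v}).Connected

/-- `x` is a cut vertex of the connected graph `G`. -/
def IsCutVertex {V : Type*} (G : SimpleGraph V) (x : V) : Prop :=
  G.Connected ∧ ¬ (G.induce {y : V | y ≠ x}).Connected

/-- A set `B` of vertices induces a subgraph without cut vertex. -/
def NoCutSet {V : Type*} (G : SimpleGraph V) (B : Set V) : Prop :=
  (G.induce B).Connected ∧
    ∀ x : B, ((G.induce B).induce {y : B | y ≠ x}).Connected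

/-- `B` is a block (2-connected component) of `G`: a maximal vertex set
inducing a connected subgraph without cut vertex. -/
def IsBlock {V : Type*} (G : SimpleGraph V) (B : Set V) : Prop :=
  NoCutSet G B ∧ ∀ B' : Set V, B ⊆ B' → NoCutSet G B' → B' = B

/-- The graph `G′` obtained from `G` by splitting the vertex `v` into two
vertices `v₁ = Sum.inl v` and `v₂ = Sum.inr ()`, where `v₁` keeps the edges
towards the neighbours in `N₁` and `v₂` those towards the other neighbours. -/
def splitVertex {V : Type*} (G : SimpleGraph V) (v : V) (N₁ : Set V) :
    SimpleGraph (V ⊕ Unit) where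
  Adj x y :=
    match x, y with
    | Sum.inl a, Sum.inl b =>
        G.Adj a b ∧ (a = v → b ∈ N₁) ∧ (b = v → a ∈ N₁)
    | Sum.inl a, Sum.inr _ => G.Adj a v ∧ a ∉ N₁
    | Sum.inr _, Sum.inl b => G.Adj b v ∧ b ∉ N₁
    | Sum.inr _, Sum.inr _ => False
  symm := by
    constructor
    rintro (a | a) (b | b) <;> simp_all <;> tauto
  loopless := by
    constructor
    rintro (a | a) <;> simp [SimpleGraph.irrefl]

namespace ChainLib

variable {α : Type*} {γ : SimpleGraph α} {S T : Set α} {a b : α}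

/-- reachability within a vertex set `S`. -/
def Chain (γ : SimpleGraph α) (S : Set α) (a b : α) : Prop :=
  Relation.ReflTransGen (fun x y => γ.Adj x y ∧ x ∈ S ∧ y ∈ S) a b

theorem Chain.refl (γ : SimpleGraph α) (S : Set α) (a : α) : Chain γ S a a :=
  Relation.ReflTransGen.refl

theorem Chain.single (h : γ.Adj a b) (ha : a ∈ S) (hb : b ∈ S) : Chain γ S a b :=
  Relation.ReflTransGen.single ⟨h, ha, hb⟩

theorem Chain.trans {c : α} (h : Chain γ S a b) (h' : Chain γ S b c) : Chain γ S a c :=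
  Relation.ReflTransGen.trans h h'

theorem Chain.symm (h : Chain γ S a b) : Chain γ S b a := by
  have : Symmetric (fun x y => γ.Adj x y ∧ x ∈ S ∧ y ∈ S) := by
    rintro x y ⟨h, hx, hy⟩; exact ⟨h.symm, hy, hx⟩
  exact @Std.Symm.symm _ _ (@Relation.ReflTransGen.stdSymm _ _ ⟨fun a b h => this h⟩) _ _ h

theorem Chain.mono (hS : S ⊆ T) (h : Chain γ S a b) : Chain γ T a b :=
  Relation.ReflTransGen.mono (fun x y ⟨h, hx, hy⟩ => ⟨h, hS hx, hS hy⟩) _ _ h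

theorem Chain.head {c : α} (h : γ.Adj a b) (ha : a ∈ S) (hb : b ∈ S)
    (h' : Chain γ S b c) : Chain γ S a c :=
  Relation.ReflTransGen.head ⟨h, ha, hb⟩ h'

theorem Chain.tail {c : α} (h : Chain γ S a b) (h' : γ.Adj b c) (hb : b ∈ S) (hc : c ∈ S) :
    Chain γ S a c :=
  Relation.ReflTransGen.tail h ⟨h', hb, hc⟩

/-- endpoints of a nontrivial chain are in `S`. -/
theorem Chain.right_mem (h : Chain γ S a b) : a = b ∨ b ∈ S := by
  induction h with
  | refl => exact Or.inl rfl
  | tail _ h' _ => exact Or.inr h'.2.2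

theorem chain_strengthen' (h : Chain γ S a b) (ha : a ∈ T)
    (hcl : ∀ p q, p ∈ T → γ.Adj p q → q ∈ S → q ∈ T) :
    Chain γ (S ∩ T) a b ∧ (a = b ∨ b ∈ T) := by
  induction h with
  | refl => exact ⟨Chain.refl _ _ _, Or.inl rfl⟩
  | @tail m n hac step ih =>
    obtain ⟨hchain, hmem⟩ := ih
    have hcT : m ∈ T := by
      rcases hmem with rfl | h
      · exact ha
      · exact h
    have hbT := hcl _ _ hcT step.1 step.2.2
    exact ⟨hchain.tail step.1 ⟨step.2.1, hcT⟩ ⟨step.2.2, hbT⟩, Or.inr hbT⟩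

theorem chain_strengthen (h : Chain γ S a b) (ha : a ∈ T)
    (hcl : ∀ p q, p ∈ T → γ.Adj p q → q ∈ S → q ∈ T) :
    Chain γ (S ∩ T) a b :=
  (chain_strengthen' h ha hcl).1

/-- first exit of a chain out of a set `T`. -/
theorem firstExit (h : Chain γ S a b) (ha : a ∈ T) (hb : b ∉ T) :
    ∃ c d, c ∈ S ∧ c ∈ T ∧ d ∈ S ∧ d ∉ T ∧ γ.Adj c d ∧
      Chain γ (S ∩ T) a c ∧ Chain γ S d b := by
  induction h using Relation.ReflTransGen.head_induction_on with
  | refl => exact absurd ha hb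
  | head step hcb ih =>
    rename_i x y
    by_cases hyT : y ∈ T
    · obtain ⟨c, d, h1, h2, h3, h4, h5, h6, h7⟩ := ih hyT
      exact ⟨c, d, h1, h2, h3, h4, h5,
        (Chain.head step.1 ⟨step.2.1, ha⟩ ⟨step.2.2, hyT⟩ h6), h7⟩
    · exact ⟨x, y, step.2.1, ha, step.2.2, hyT, step.1, Chain.refl _ _ _, hcb⟩

theorem Chain.reachable (h : Chain γ S a b) : γ.Reachable a b := by
  induction h with
  | refl => exact Reachable.refl _
  | tail _ step ih => exact ih.trans step.1.reachable

theorem chain_of_walk {x y : ↥S} (w : (γ.induce S).Walk x y) :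
    Chain γ S x.val y.val := by
  induction w with
  | nil => exact Chain.refl _ _ _
  | cons h p ih =>
    rename_i u w₁ _
    exact Chain.head h u.2 w₁.2 ih

theorem reachable_induce_iff {x y : ↥S} :
    (γ.induce S).Reachable x y ↔ Chain γ S x.val y.val := by
  constructor
  · rintro ⟨w⟩; exact chain_of_walk w
  · intro h
    have key : ∀ (b : α), Chain γ S x.val b →
        ∀ (hb : b ∈ S), (γ.induce S).Reachable x ⟨b, hb⟩ := by
      intro b h
      induction h with
      | refl => intro hb; exact Reachable.refl _
      | tail hac step ih =>
        intro hb
        exact (ih step.2.1).trans (SimpleGraph.Adj.reachable (by exact step.1))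
    have := key _ h y.2
    simpa using this

theorem connected_induce_iff :
    (γ.induce S).Connected ↔ S.Nonempty ∧ ∀ a ∈ S, ∀ b ∈ S, Chain γ S a b := by
  constructor
  · intro h
    refine ⟨?_, fun a ha b hb => reachable_induce_iff.mp (h.preconnected ⟨a, ha⟩ ⟨b, hb⟩)⟩
    obtain ⟨⟨a, ha⟩⟩ := h.nonempty
    exact ⟨a, ha⟩
  · rintro ⟨hne, h⟩
    have : Nonempty ↥S := hne.to_subtype
    exact ⟨fun x y => reachable_induce_iff.mpr (h _ x.2 _ y.2)⟩

theorem chain_induce_iff {T : Set ↥S} {x y : ↥S} (hx : x ∈ T) (hy : y ∈ T) :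
    Chain (γ.induce S) T x y ↔ Chain γ (Subtype.val '' T) x.val y.val := by
  constructor
  · intro h
    exact Relation.ReflTransGen.lift Subtype.val
      (fun a b hab => ⟨hab.1, ⟨a, hab.2.1, rfl⟩, ⟨b, hab.2.2, rfl⟩⟩) _ _ h
  · intro h
    have key : ∀ (b : α), Chain γ (Subtype.val '' T) x.val b →
        ∀ (b' : ↥S), b = b'.val → b' ∈ T → Chain (γ.induce S) T x b' := by
      intro b h
      induction h with
      | refl =>
        rintro b' hb' _
        have : x = b' := Subtype.ext hb'
        rw [← this]; exact Chain.refl _ _ _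
      | tail hac step ih =>
        rintro b' rfl hb'T
        obtain ⟨c', hc'T, rfl⟩ := step.2.1
        exact (ih c' rfl hc'T).tail (by exact step.1) hc'T hb'T
    exact key _ h y rfl hy

end ChainLib

namespace SplitProof
open Sum

section
variable {V : Type*} (G : SimpleGraph V) (v : V) (N₁ : Set V)

local notation "H" => splitVertex G v N₁

lemma adj_inl_inl {a b : V} : (H).Adj (inl a) (inl b) ↔
    G.Adj a b ∧ (a = v → b ∈ N₁) ∧ (b = v → a ∈ N₁) := Iff.rfl

lemma adj_inl_inr {a : V} {u : Unit} : (H).Adj (inl a) (inr u) ↔ G.Adj a v ∧ a ∉ N₁ := Iff.rfl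

lemma adj_inr_inl {b : V} {u : Unit} : (H).Adj (inr u) (inl b) ↔ G.Adj b v ∧ b ∉ N₁ := Iff.rfl

lemma not_adj_inr_inr {u u' : Unit} : ¬ (H).Adj (inr u) (inr u') := fun h => h

/-- the side of `x` containing `v₁`. -/
def sA (x : V ⊕ Unit) : Set (V ⊕ Unit) :=
  {z | z ≠ x ∧ ChainLib.Chain (H) {y | y ≠ x} (inl v) z}

/-- the side of `x` containing `v₂`. -/
def sB (x : V ⊕ Unit) : Set (V ⊕ Unit) :=
  {z | z ≠ x ∧ ChainLib.Chain (H) {y | y ≠ x} (inr ()) z}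

/-- `x` separates `v₁` from `v₂`. -/
def cutP (x : V ⊕ Unit) : Prop :=
  x ≠ inl v ∧ x ≠ inr () ∧ ¬ ChainLib.Chain (H) {y | y ≠ x} (inl v) (inr ())

def nodeP (x : V ⊕ Unit) : Prop := x = inl v ∨ x = inr () ∨ cutP G v N₁ x

end
end SplitProof

namespace SplitProof
open Sum ChainLib
section
variable {V : Type*} {G : SimpleGraph V} {v : V} {N₁ : Set V}

local notation "H" => splitVertex G v N₁
local notation "v₁" => (inl v : V ⊕ Unit)
local notation "v₂" => (inr () : V ⊕ Unit)

lemma lift_chain {S : Set V} (hS : v ∉ S) {a b : V} (h : Chain G S a b) :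
    Chain (H) (inl '' S) (inl a : V ⊕ Unit) (inl b) := by
  refine Relation.ReflTransGen.lift inl (fun p q hpq => ?_) _ _ h
  obtain ⟨hadj, hp, hq⟩ := hpq
  refine ⟨?_, ⟨p, hp, rfl⟩, ⟨q, hq, rfl⟩⟩
  exact (adj_inl_inl G v N₁).mpr ⟨hadj,
    fun h => absurd (h ▸ hp) hS, fun h => absurd (h ▸ hq) hS⟩

lemma sA_v1_empty : sA G v N₁ (inl v) = ∅ := by
  ext z
  simp only [Set.mem_empty_iff_false, iff_false, sA, Set.mem_setOf_eq, not_and]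
  intro hz h
  rcases Relation.ReflTransGen.cases_head h with rfl | ⟨c, hc, _⟩
  · exact hz rfl
  · exact hc.2.1 rfl

lemma sB_v2_empty : sB G v N₁ (inr ()) = ∅ := by
  ext z
  simp only [Set.mem_empty_iff_false, iff_false, sB, Set.mem_setOf_eq, not_and]
  intro hz h
  rcases Relation.ReflTransGen.cases_head h with rfl | ⟨c, hc, _⟩
  · exact hz rfl
  · exact hc.2.1 rfl

lemma sA_adj_closed {x z y : V ⊕ Unit} (hz : z ∈ sA G v N₁ x) (hadj : (H).Adj z y)
    (hy : y ≠ x) : y ∈ sA G v N₁ x :=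
  ⟨hy, hz.2.tail hadj hz.1 hy⟩

lemma sB_adj_closed {x z y : V ⊕ Unit} (hz : z ∈ sB G v N₁ x) (hadj : (H).Adj z y)
    (hy : y ≠ x) : y ∈ sB G v N₁ x :=
  ⟨hy, hz.2.tail hadj hz.1 hy⟩

lemma sA_chain {x z : V ⊕ Unit} (hz : z ∈ sA G v N₁ x) :
    Chain (H) (sA G v N₁ x) v₁ z := by
  by_cases hx : x = v₁
  · subst hx; rw [sA_v1_empty] at hz; exact absurd hz (Set.notMem_empty _)
  · have h1 : v₁ ∈ sA G v N₁ x := ⟨fun h => hx h.symm, Relation.ReflTransGen.refl⟩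
    have := chain_strengthen (T := sA G v N₁ x) hz.2 h1
      (fun p q hp hadj hq => sA_adj_closed hp hadj hq)
    exact this.mono (Set.inter_subset_right)

lemma sB_chain {x z : V ⊕ Unit} (hz : z ∈ sB G v N₁ x) :
    Chain (H) (sB G v N₁ x) v₂ z := by
  by_cases hx : x = v₂
  · subst hx; rw [sB_v2_empty] at hz; exact absurd hz (Set.notMem_empty _)
  · have h1 : v₂ ∈ sB G v N₁ x := ⟨fun h => hx h.symm, Relation.ReflTransGen.refl⟩
    have := chain_strengthen (T := sB G v N₁ x) hz.2 h1
      (fun p q hp hadj hq => sB_adj_closed hp hadj hq)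
    exact this.mono (Set.inter_subset_right)

lemma node_disj {x z : V ⊕ Unit} (hx : nodeP G v N₁ x)
    (h1 : z ∈ sA G v N₁ x) (h2 : z ∈ sB G v N₁ x) : False := by
  rcases hx with rfl | rfl | hcut
  · rw [sA_v1_empty] at h1; exact h1
  · rw [sB_v2_empty] at h2; exact h2
  · exact hcut.2.2 (h1.2.trans h2.2.symm)

end
end SplitProof

namespace SplitProof
open Sum ChainLib
section
variable {V : Type*} {G : SimpleGraph V} {v : V} {N₁ : Set V}

local notation "H" => splitVertex G v N₁
local notation "v₁" => (inl v : V ⊕ Unit)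
local notation "v₂" => (inr () : V ⊕ Unit)

variable (h2c : TwoConnectedGraph G) (hN₁sub : N₁ ⊆ G.neighborSet v)
  (hN₁ : N₁.Nonempty) (hN₂ : (G.neighborSet v \ N₁).Nonempty)

include h2c hN₁sub hN₁ hN₂

lemma gchain {a b c : V} (hb : b ≠ a) (hc : c ≠ a) : Chain G {w | w ≠ a} b c :=
  (ChainLib.connected_induce_iff.mp (h2c.2.2 a)).2 b hb c hc

/-- Every vertex other than `inl a` (`a ≠ v`) is on one of the two sides of `inl a`. -/
lemma P1' {a : V} (ha : a ≠ v) {z : V ⊕ Unit} (hz : z ≠ inl a) :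
    z ∈ sA G v N₁ (inl a) ∨ z ∈ sB G v N₁ (inl a) := by
  match z with
  | inr u => exact Or.inr ⟨hz, Relation.ReflTransGen.refl⟩
  | inl b =>
    by_cases hbv : b = v
    · subst hbv; exact Or.inl ⟨hz, Relation.ReflTransGen.refl⟩
    · have hba : b ≠ a := fun h => hz (by rw [h])
      have hchain : Chain G {w | w ≠ a} b v := gchain h2c hN₁sub hN₁ hN₂ hba (Ne.symm ha)
      obtain ⟨c, d, hcS, hcT, hdS, hdT, hadj, hch1, -⟩ :=
        firstExit hchain (T := {w | w ≠ v}) hbv (by simp)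
      have hdv : d = v := not_not.mp hdT
      rw [hdv] at hadj
      have hvS : v ∉ ({w | w ≠ a} ∩ {w | w ≠ v} : Set V) := by simp
      have hlift := lift_chain (N₁ := N₁) hvS hch1
      have hlift' : Chain (H) {y | y ≠ inl a} (inl b : V ⊕ Unit) (inl c) := by
        refine hlift.mono ?_
        rintro _ ⟨p, hp, rfl⟩
        simpa using hp.1
      have hcv : c ≠ v := hcT
      have hca : c ≠ a := hcS
      by_cases hcN : c ∈ N₁
      · refine Or.inl ⟨hz, ?_⟩
        refine Chain.symm ?_
        refine hlift'.tail ((adj_inl_inl G v N₁).mpr ⟨hadj, fun h => absurd h hcv, fun _ => hcN⟩)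
          (by simpa using hca) (by simpa using Ne.symm ha)
      · refine Or.inr ⟨hz, ?_⟩
        refine Chain.symm ?_
        exact hlift'.tail ((adj_inl_inr G v N₁).mpr ⟨hadj, hcN⟩)
          (by simpa using hca) (by simp)

/-- Everything except `v₁` is on the `v₂`-side of `v₁`. -/
lemma sB_v1 {z : V ⊕ Unit} (hz : z ≠ v₁) : z ∈ sB G v N₁ v₁ := by
  obtain ⟨n2, hn2⟩ := id hN₂
  have hn2v : G.Adj n2 v := ((SimpleGraph.mem_neighborSet _ _ _).mp hn2.1).symm
  have hn2N : n2 ∉ N₁ := hn2.2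
  have hn2ne : n2 ≠ v := hn2v.ne
  match z with
  | inr u => exact ⟨hz, Relation.ReflTransGen.refl⟩
  | inl b =>
    have hbv : b ≠ v := fun h => hz (by rw [h])
    have hchain : Chain G {w | w ≠ v} b n2 := gchain h2c hN₁sub hN₁ hN₂ hbv hn2ne
    have hlift := lift_chain (N₁ := N₁) (S := {w | w ≠ v}) (fun h => h rfl) hchain
    have hlift' : Chain (H) {y | y ≠ v₁} (inl b : V ⊕ Unit) (inl n2) := by
      refine hlift.mono ?_
      rintro _ ⟨p, hp, rfl⟩
      simpa using hp
    refine ⟨hz, Chain.symm ?_⟩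
    exact hlift'.tail ((adj_inl_inr G v N₁).mpr ⟨hn2v, hn2N⟩)
      (by simpa using hn2ne) (by simp)

/-- Everything except `v₂` is on the `v₁`-side of `v₂`. -/
lemma sA_v2 {z : V ⊕ Unit} (hz : z ≠ v₂) : z ∈ sA G v N₁ v₂ := by
  obtain ⟨n1, hn1⟩ := id hN₁
  have hn1v : G.Adj n1 v := ((SimpleGraph.mem_neighborSet _ _ _).mp (hN₁sub hn1)).symm
  have hn1ne : n1 ≠ v := hn1v.ne
  match z with
  | inl b =>
    by_cases hbv : b = v
    · subst hbv; exact ⟨hz, Relation.ReflTransGen.refl⟩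
    · have hchain : Chain G {w | w ≠ v} b n1 := gchain h2c hN₁sub hN₁ hN₂ hbv hn1ne
      have hlift := lift_chain (N₁ := N₁) (S := {w | w ≠ v}) (fun h => h rfl) hchain
      have hlift' : Chain (H) {y | y ≠ v₂} (inl b : V ⊕ Unit) (inl n1) := by
        refine hlift.mono ?_
        rintro _ ⟨p, hp, rfl⟩
        simp
      refine ⟨hz, Chain.symm ?_⟩
      refine hlift'.tail ((adj_inl_inl G v N₁).mpr
        ⟨hn1v, fun h => absurd h hn1ne, fun _ => hn1⟩) (by simp) (by simp)
  | inr u => exact absurd rfl hz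

/-- `v₁` and `v₂` are joined in `H`. -/
lemma chain_univ_v12 : Chain (H) Set.univ v₁ v₂ := by
  obtain ⟨n1, hn1⟩ := id hN₁
  obtain ⟨n2, hn2⟩ := id hN₂
  have hn1v : G.Adj n1 v := ((SimpleGraph.mem_neighborSet _ _ _).mp (hN₁sub hn1)).symm
  have hn2v : G.Adj n2 v := ((SimpleGraph.mem_neighborSet _ _ _).mp hn2.1).symm
  have hchain : Chain G {w | w ≠ v} n1 n2 := gchain h2c hN₁sub hN₁ hN₂ hn1v.ne hn2v.ne
  have hlift := (lift_chain (N₁ := N₁) (S := {w | w ≠ v}) (fun h => h rfl) hchain).mono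
    (Set.subset_univ _)
  refine Chain.head ((adj_inl_inl G v N₁).mpr
    ⟨hn1v.symm, fun _ => hn1, fun h => absurd h hn1v.ne⟩) trivial trivial ?_
  exact hlift.tail ((adj_inl_inr G v N₁).mpr ⟨hn2v, hn2.2⟩) trivial trivial

/-- Everything reaches `v₁` in `H`. -/
lemma chain_univ_to_v1 (z : V ⊕ Unit) : Chain (H) Set.univ z v₁ := by
  match z with
  | inr u => exact (chain_univ_v12 h2c hN₁sub hN₁ hN₂).symm
  | inl b =>
    by_cases hbv : b = v
    · subst hbv; exact Relation.ReflTransGen.refl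
    · obtain ⟨n1, hn1⟩ := id hN₁
      have hn1v : G.Adj n1 v := ((SimpleGraph.mem_neighborSet _ _ _).mp (hN₁sub hn1)).symm
      have hchain : Chain G {w | w ≠ v} b n1 := gchain h2c hN₁sub hN₁ hN₂ hbv hn1v.ne
      have hlift := (lift_chain (N₁ := N₁) (S := {w | w ≠ v}) (fun h => h rfl) hchain).mono
        (Set.subset_univ _)
      exact hlift.tail ((adj_inl_inl G v N₁).mpr
        ⟨hn1v, fun h => absurd h hn1v.ne, fun _ => hn1⟩) trivial trivial

lemma H_connected : (H).Connected := by
  have : Nonempty (V ⊕ Unit) := ⟨inr ()⟩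
  refine ⟨fun x y => ?_⟩
  exact ((chain_univ_to_v1 h2c hN₁sub hN₁ hN₂ x).trans
    (chain_univ_to_v1 h2c hN₁sub hN₁ hN₂ y).symm).reachable

end
end SplitProof
namespace SplitProof
open Sum ChainLib
section
variable {V : Type*} {G : SimpleGraph V} {v : V} {N₁ : Set V}

local notation "H" => splitVertex G v N₁
local notation "v₁" => (inl v : V ⊕ Unit)
local notation "v₂" => (inr () : V ⊕ Unit)

lemma eq_inl_of_ne {x : V ⊕ Unit} (hx1 : x ≠ v₁) (hx2 : x ≠ v₂) :
    ∃ a : V, x = inl a ∧ a ≠ v := by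
  match x with
  | inl a => exact ⟨a, rfl, fun h => hx1 (by rw [h])⟩
  | inr u => cases u; exact absurd rfl hx2

variable (h2c : TwoConnectedGraph G) (hN₁sub : N₁ ⊆ G.neighborSet v)
  (hN₁ : N₁.Nonempty) (hN₂ : (G.neighborSet v \ N₁).Nonempty)

include h2c hN₁sub hN₁ hN₂

lemma node_P1 {x : V ⊕ Unit} (hx : nodeP G v N₁ x) {z : V ⊕ Unit} (hz : z ≠ x) :
    z ∈ sA G v N₁ x ∨ z ∈ sB G v N₁ x := by
  rcases hx with rfl | rfl | hcut
  · exact Or.inr (sB_v1 h2c hN₁sub hN₁ hN₂ hz)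
  · exact Or.inl (sA_v2 h2c hN₁sub hN₁ hN₂ hz)
  · obtain ⟨a, rfl, ha⟩ := eq_inl_of_ne hcut.1 hcut.2.1
    exact P1' h2c hN₁sub hN₁ hN₂ ha hz

lemma node_P5B {x : V ⊕ Unit} (hx : nodeP G v N₁ x) (hxv2 : x ≠ v₂) :
    Chain (H) (sB G v N₁ x ∪ {x}) x v₂ := by
  have hv2B : v₂ ∈ sB G v N₁ x := ⟨Ne.symm hxv2, Relation.ReflTransGen.refl⟩
  have hv1nB : v₁ ∉ sB G v N₁ x := by
    intro hmem
    rcases hx with rfl | rfl | hcut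
    · exact hmem.1 rfl
    · exact hxv2 rfl
    · exact hcut.2.2 hmem.2.symm
  obtain ⟨c, d, -, hcT, -, hdT, hadj, hch1, -⟩ :=
    firstExit (chain_univ_to_v1 h2c hN₁sub hN₁ hN₂ v₂) hv2B hv1nB
  have hdx : d = x := by
    by_contra hdx
    exact hdT (sB_adj_closed hcT hadj hdx)
  subst hdx
  refine Chain.head hadj.symm (Or.inr rfl) (Or.inl hcT) ?_
  exact (hch1.mono (fun s hs => Or.inl hs.2)).symm

lemma node_P5A {x : V ⊕ Unit} (hx : nodeP G v N₁ x) (hxv1 : x ≠ v₁) :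
    Chain (H) (sA G v N₁ x ∪ {x}) x v₁ := by
  have hv1A : v₁ ∈ sA G v N₁ x := ⟨Ne.symm hxv1, Relation.ReflTransGen.refl⟩
  have hv2nA : v₂ ∉ sA G v N₁ x := by
    intro hmem
    rcases hx with rfl | rfl | hcut
    · exact hxv1 rfl
    · exact hmem.1 rfl
    · exact hcut.2.2 hmem.2
  obtain ⟨c, d, -, hcT, -, hdT, hadj, hch1, -⟩ :=
    firstExit (chain_univ_v12 h2c hN₁sub hN₁ hN₂) hv1A hv2nA
  have hdx : d = x := by
    by_contra hdx
    exact hdT (sA_adj_closed hcT hadj hdx)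
  subst hdx
  refine Chain.head hadj.symm (Or.inr rfl) (Or.inl hcT) ?_
  exact (hch1.mono (fun s hs => Or.inl hs.2)).symm

lemma swapAB {x : V ⊕ Unit} (hx : nodeP G v N₁ x) {y : V ⊕ Unit}
    (h : y ∈ sA G v N₁ x) : x ∈ sB G v N₁ y := by
  have hyx : y ≠ x := h.1
  by_cases hxv2 : x = v₂
  · subst hxv2
    exact ⟨Ne.symm hyx, Relation.ReflTransGen.refl⟩
  · have hP5 := node_P5B h2c hN₁sub hN₁ hN₂ hx hxv2
    have hyB : y ∉ sB G v N₁ x := fun hc => node_disj hx h hc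
    have hsub : sB G v N₁ x ∪ {x} ⊆ {w | w ≠ y} := by
      rintro s (hs | rfl)
      · exact fun hsy => hyB (hsy ▸ hs)
      · exact Ne.symm hyx
    exact ⟨Ne.symm hyx, (hP5.mono hsub).symm⟩

lemma swapBA {x : V ⊕ Unit} (hx : nodeP G v N₁ x) {y : V ⊕ Unit}
    (h : y ∈ sB G v N₁ x) : x ∈ sA G v N₁ y := by
  have hyx : y ≠ x := h.1
  by_cases hxv1 : x = v₁
  · subst hxv1
    exact ⟨Ne.symm hyx, Relation.ReflTransGen.refl⟩
  · have hP5 := node_P5A h2c hN₁sub hN₁ hN₂ hx hxv1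
    have hyA : y ∉ sA G v N₁ x := fun hc => node_disj hx hc h
    have hsub : sA G v N₁ x ∪ {x} ⊆ {w | w ≠ y} := by
      rintro s (hs | rfl)
      · exact fun hsy => hyA (hsy ▸ hs)
      · exact Ne.symm hyx
    exact ⟨Ne.symm hyx, (hP5.mono hsub).symm⟩

lemma lt_asymm' {x y : V ⊕ Unit} (hx : nodeP G v N₁ x) (hy : nodeP G v N₁ y)
    (h1 : x ∈ sA G v N₁ y) (h2 : y ∈ sA G v N₁ x) : False :=
  node_disj hy h1 (swapAB h2c hN₁sub hN₁ hN₂ hx h2)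

lemma lt_total' {x y : V ⊕ Unit} (hx : nodeP G v N₁ x) (hy : nodeP G v N₁ y)
    (hne : x ≠ y) : x ∈ sA G v N₁ y ∨ y ∈ sA G v N₁ x := by
  rcases node_P1 h2c hN₁sub hN₁ hN₂ hx (Ne.symm hne) with h | h
  · exact Or.inr h
  · exact Or.inl (swapBA h2c hN₁sub hN₁ hN₂ hx h)

lemma lt_trans' {x y z : V ⊕ Unit} (hy : nodeP G v N₁ y) (hz : nodeP G v N₁ z)
    (h1 : x ∈ sA G v N₁ y) (h2 : y ∈ sA G v N₁ z) : x ∈ sA G v N₁ z := by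
  have hzy : z ∉ sA G v N₁ y := fun hc => lt_asymm' h2c hN₁sub hN₁ hN₂ hy hz h2 hc
  have hxz : x ≠ z := by
    rintro rfl
    exact lt_asymm' h2c hN₁sub hN₁ hN₂ hy hz h2 h1
  refine ⟨hxz, ?_⟩
  refine ((sA_chain h1).mono ?_).symm.symm
  intro s hs
  exact fun hsz => hzy (hsz ▸ hs)

lemma nest' {x y : V ⊕ Unit} (hx : nodeP G v N₁ x) (hy : nodeP G v N₁ y)
    (h : x ∈ sA G v N₁ y) : sA G v N₁ x ∪ {x} ⊆ sA G v N₁ y := by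
  rintro s (hs | rfl)
  · have hys : y ∉ sA G v N₁ x := fun hc => lt_asymm' h2c hN₁sub hN₁ hN₂ hx hy h hc
    have hsy : s ≠ y := fun hc => hys (hc ▸ hs)
    refine ⟨hsy, (sA_chain hs).mono ?_⟩
    intro t ht
    exact fun hty => hys (hty ▸ ht)
  · exact h

lemma noncut_chain {x : V ⊕ Unit} (hx1 : x ≠ v₁) (hx2 : x ≠ v₂)
    (hch : Chain (H) {y | y ≠ x} v₁ v₂) {z : V ⊕ Unit} (hz : z ≠ x) :
    Chain (H) {y | y ≠ x} z v₁ := by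
  obtain ⟨a, rfl, ha⟩ := eq_inl_of_ne hx1 hx2
  rcases P1' h2c hN₁sub hN₁ hN₂ ha hz with hmem | hmem
  · exact hmem.2.symm
  · exact hmem.2.symm.trans hch.symm

lemma cut_iff (x : V ⊕ Unit) : IsCutVertex (H) x ↔ cutP G v N₁ x := by
  constructor
  · rintro ⟨-, hdis⟩
    have hx1 : x ≠ v₁ := by
      rintro rfl
      apply hdis
      refine ChainLib.connected_induce_iff.mpr ⟨⟨v₂, by simp⟩, ?_⟩
      intro a ha b hb
      exact ((sB_v1 h2c hN₁sub hN₁ hN₂ ha).2).symm.trans (sB_v1 h2c hN₁sub hN₁ hN₂ hb).2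
    have hx2 : x ≠ v₂ := by
      rintro rfl
      apply hdis
      refine ChainLib.connected_induce_iff.mpr ⟨⟨v₁, by simp⟩, ?_⟩
      intro a ha b hb
      exact ((sA_v2 h2c hN₁sub hN₁ hN₂ ha).2).symm.trans (sA_v2 h2c hN₁sub hN₁ hN₂ hb).2
    refine ⟨hx1, hx2, fun hch => hdis ?_⟩
    refine ChainLib.connected_induce_iff.mpr ⟨⟨v₁, Ne.symm hx1⟩, ?_⟩
    intro a ha b hb
    exact (noncut_chain h2c hN₁sub hN₁ hN₂ hx1 hx2 hch ha).trans
      (noncut_chain h2c hN₁sub hN₁ hN₂ hx1 hx2 hch hb).symm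
  · rintro ⟨hx1, hx2, hnc⟩
    refine ⟨H_connected h2c hN₁sub hN₁ hN₂, fun hconn => hnc ?_⟩
    exact (ChainLib.connected_induce_iff.mp hconn).2 v₁ (Ne.symm hx1) v₂ (Ne.symm hx2)

end
end SplitProof
namespace ChainLib
open SimpleGraph
variable {α : Type*} {γ : SimpleGraph α} {S : Set α}

theorem induce_induce_connected_iff {x : ↥S} :
    ((γ.induce S).induce {y : ↥S | y ≠ x}).Connected ↔
      (S \ {x.val}).Nonempty ∧
        ∀ a ∈ S \ {x.val}, ∀ b ∈ S \ {x.val}, Chain γ (S \ {x.val}) a b := by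
  have himg : Subtype.val '' {y : ↥S | y ≠ x} = S \ {x.val} := by
    ext z
    constructor
    · rintro ⟨⟨b, hb⟩, hbne, rfl⟩
      exact ⟨hb, fun h => hbne (Subtype.ext h)⟩
    · rintro ⟨hz, hzx⟩
      exact ⟨⟨z, hz⟩, fun h => hzx (congrArg Subtype.val h), rfl⟩
  rw [ChainLib.connected_induce_iff]
  constructor
  · rintro ⟨⟨⟨a, haS⟩, hane⟩, hch⟩
    refine ⟨⟨a, haS, fun h => hane (Subtype.ext h)⟩, ?_⟩
    rintro b ⟨hbS, hbx⟩ c ⟨hcS, hcx⟩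
    have hb : (⟨b, hbS⟩ : ↥S) ∈ {y : ↥S | y ≠ x} := fun h => hbx (congrArg Subtype.val h)
    have hc : (⟨c, hcS⟩ : ↥S) ∈ {y : ↥S | y ≠ x} := fun h => hcx (congrArg Subtype.val h)
    have := (chain_induce_iff hb hc).mp (hch _ hb _ hc)
    rwa [himg] at this
  · rintro ⟨⟨a, haS, hax⟩, hch⟩
    refine ⟨⟨⟨a, haS⟩, fun h => hax (congrArg Subtype.val h)⟩, ?_⟩
    rintro ⟨b, hbS⟩ hb ⟨c, hcS⟩ hc
    refine (chain_induce_iff hb hc).mpr ?_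
    rw [himg]
    exact hch b ⟨hbS, fun h => hb (Subtype.ext h)⟩ c ⟨hcS, fun h => hc (Subtype.ext h)⟩

end ChainLib

namespace SplitProof
open Sum ChainLib
section
variable {V : Type*} {G : SimpleGraph V} {v : V} {N₁ : Set V}

local notation "H" => splitVertex G v N₁
local notation "v₁" => (inl v : V ⊕ Unit)
local notation "v₂" => (inr () : V ⊕ Unit)

lemma v1_not_sB {x : V ⊕ Unit} (hx : nodeP G v N₁ x) : v₁ ∉ sB G v N₁ x := by
  intro hmem
  rcases hx with rfl | rfl | hcut
  · exact hmem.1 rfl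
  · rw [sB_v2_empty] at hmem; exact hmem
  · exact hcut.2.2 hmem.2.symm

lemma v2_not_sA {x : V ⊕ Unit} (hx : nodeP G v N₁ x) : v₂ ∉ sA G v N₁ x := by
  intro hmem
  rcases hx with rfl | rfl | hcut
  · rw [sA_v1_empty] at hmem; exact hmem
  · exact hmem.1 rfl
  · exact hcut.2.2 hmem.2

/-- The `i`-th candidate block: everything between `x` and `y`. -/
def seg (G : SimpleGraph V) (v : V) (N₁ : Set V) (x y : V ⊕ Unit) : Set (V ⊕ Unit) :=
  (sB G v N₁ x ∩ sA G v N₁ y) ∪ {x, y}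

lemma x_mem_seg {x y : V ⊕ Unit} : x ∈ seg G v N₁ x y := Or.inr (Or.inl rfl)
lemma y_mem_seg {x y : V ⊕ Unit} : y ∈ seg G v N₁ x y := Or.inr (Or.inr rfl)

/-- chains to `y` inside the segment, avoiding `x`. -/
lemma seg_chain_right {x y : V ⊕ Unit} (hy : nodeP G v N₁ y) {z : V ⊕ Unit}
    (hz : z ∈ sB G v N₁ x ∩ sA G v N₁ y) :
    Chain (H) ((sB G v N₁ x ∩ sA G v N₁ y) ∪ {y}) z y := by
  have hv2 : v₂ ∉ sA G v N₁ y := v2_not_sA hy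
  obtain ⟨c, d, hcS, hcT, hdS, hdT, hadj, hch1, -⟩ :=
    firstExit (T := sA G v N₁ y) (sB_chain hz.1).symm hz.2 hv2
  have hdy : d = y := by
    by_contra hdy
    exact hdT (sA_adj_closed hcT hadj hdy)
  subst hdy
  exact (hch1.mono (fun s hs => Or.inl hs)).tail hadj (Or.inl ⟨hcS, hcT⟩) (Or.inr rfl)

/-- chains to `x` inside the segment, avoiding `y`. -/
lemma seg_chain_left {x y : V ⊕ Unit} (hx : nodeP G v N₁ x) {z : V ⊕ Unit}
    (hz : z ∈ sB G v N₁ x ∩ sA G v N₁ y) :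
    Chain (H) ((sB G v N₁ x ∩ sA G v N₁ y) ∪ {x}) z x := by
  have hv1 : v₁ ∉ sB G v N₁ x := v1_not_sB hx
  obtain ⟨c, d, hcS, hcT, hdS, hdT, hadj, hch1, -⟩ :=
    firstExit (T := sB G v N₁ x) (sA_chain hz.2).symm hz.1 hv1
  have hdx : d = x := by
    by_contra hdx
    exact hdT (sB_adj_closed hcT hadj hdx)
  subst hdx
  exact (hch1.mono (fun s hs => Or.inl ⟨hs.2, hs.1⟩)).tail hadj (Or.inl ⟨hcT, hcS⟩) (Or.inr rfl)

end
end SplitProof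
namespace SplitProof
open Sum ChainLib
section
variable {V : Type*} {G : SimpleGraph V} {v : V} {N₁ : Set V}

local notation "H" => splitVertex G v N₁
local notation "v₁" => (inl v : V ⊕ Unit)
local notation "v₂" => (inr () : V ⊕ Unit)

variable (h2c : TwoConnectedGraph G) (hN₁sub : N₁ ⊆ G.neighborSet v)
  (hN₁ : N₁.Nonempty) (hN₂ : (G.neighborSet v \ N₁).Nonempty)

include h2c hN₁sub hN₁ hN₂

/-- `x` is joined to `y` inside the segment. -/
lemma seg_chain_xy {x y : V ⊕ Unit} (hx : nodeP G v N₁ x) (hy : nodeP G v N₁ y)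
    (hxy : x ∈ sA G v N₁ y) : Chain (H) (seg G v N₁ x y) x y := by
  have hxv2 : x ≠ v₂ := fun h => v2_not_sA hy (h ▸ hxy)
  have hch := node_P5B h2c hN₁sub hN₁ hN₂ hx hxv2
  have hxT : x ∈ sA G v N₁ y ∪ {x} := Or.inr rfl
  have hv2T : v₂ ∉ sA G v N₁ y ∪ {x} := by
    rintro (h | h)
    · exact v2_not_sA hy h
    · exact hxv2 h.symm
  obtain ⟨c, d, hcS, hcT, hdS, hdT, hadj, hch1, -⟩ :=
    firstExit (T := sA G v N₁ y ∪ {x}) hch hxT hv2T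
  have hcA : c ∈ sA G v N₁ y := by
    rcases hcT with h | h
    · exact h
    · exact h ▸ hxy
  have hdy : d = y := by
    by_contra hdy
    exact hdT (Or.inl (sA_adj_closed hcA hadj hdy))
  subst hdy
  refine (hch1.mono ?_).tail hadj ?_ y_mem_seg
  · rintro s ⟨hs1, hs2⟩
    rcases hs1 with hsB | hsx
    · rcases hs2 with hsA | hsx
      · exact Or.inl ⟨hsB, hsA⟩
      · exact hsx ▸ x_mem_seg
    · exact hsx ▸ x_mem_seg
  · rcases hcS with hcB | hcx
    · exact Or.inl ⟨hcB, hcA⟩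
    · exact hcx ▸ x_mem_seg

/-- from an interior vertex one can escape to `x` or `y` inside the segment,
avoiding an interior non-cut vertex `x'`. -/
lemma seg_interior_escape {x y : V ⊕ Unit} (hx : nodeP G v N₁ x) (hy : nodeP G v N₁ y)
    {x' z : V ⊕ Unit} (hx' : x' ∈ sB G v N₁ x ∩ sA G v N₁ y) (hnc : ¬ cutP G v N₁ x')
    (hz : z ∈ sB G v N₁ x ∩ sA G v N₁ y) (hzx' : z ≠ x') :
    ∃ t, (t = x ∨ t = y) ∧ Chain (H) (seg G v N₁ x y \ {x'}) z t := by
  have hx'1 : x' ≠ v₁ := fun h => v1_not_sB hx (h ▸ hx'.1)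
  have hx'2 : x' ≠ v₂ := fun h => v2_not_sA hy (h ▸ hx'.2)
  have hch12 : Chain (H) {w | w ≠ x'} v₁ v₂ := by
    by_contra hc
    exact hnc ⟨hx'1, hx'2, hc⟩
  have hchz : Chain (H) {w | w ≠ x'} z v₂ :=
    (noncut_chain h2c hN₁sub hN₁ hN₂ hx'1 hx'2 hch12 hzx').trans hch12
  have hzT : z ∈ (sB G v N₁ x ∩ sA G v N₁ y) \ {x'} := ⟨hz, hzx'⟩
  have hv2T : v₂ ∉ (sB G v N₁ x ∩ sA G v N₁ y) \ {x'} := fun h => v2_not_sA hy h.1.2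
  obtain ⟨c, d, hcS, hcT, hdS, hdT, hadj, hch1, -⟩ := firstExit hchz hzT hv2T
  have hdxy : d = x ∨ d = y := by
    by_cases hdx : d = x
    · exact Or.inl hdx
    · by_cases hdy : d = y
      · exact Or.inr hdy
      · exact absurd ⟨⟨sB_adj_closed hcT.1.1 hadj hdx, sA_adj_closed hcT.1.2 hadj hdy⟩,
          hdS⟩ hdT
  refine ⟨d, hdxy, (hch1.mono ?_).tail hadj ⟨Or.inl hcT.1, hcT.2⟩ ?_⟩
  · rintro s ⟨-, hs⟩
    exact ⟨Or.inl hs.1, hs.2⟩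
  · rcases hdxy with rfl | rfl
    · exact ⟨x_mem_seg, hdS⟩
    · exact ⟨y_mem_seg, hdS⟩

/-- `x` and `y` stay joined after deleting an interior non-cut vertex `x'`. -/
lemma seg_xy_avoid {x y : V ⊕ Unit} (hx : nodeP G v N₁ x) (hy : nodeP G v N₁ y)
    (hxy : x ∈ sA G v N₁ y) {x' : V ⊕ Unit}
    (hx' : x' ∈ sB G v N₁ x ∩ sA G v N₁ y) (hnc : ¬ cutP G v N₁ x') :
    Chain (H) (seg G v N₁ x y \ {x'}) x y := by
  by_contra hnxy
  have hx'x : x' ≠ x := hx'.1.1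
  have hx'y : x' ≠ y := hx'.2.1
  have hxv2 : x ≠ v₂ := fun h => v2_not_sA hy (h ▸ hxy)
  have hx'1 : x' ≠ v₁ := fun h => v1_not_sB hx (h ▸ hx'.1)
  have hx'2 : x' ≠ v₂ := fun h => v2_not_sA hy (h ▸ hx'.2)
  have hch12 : Chain (H) {w | w ≠ x'} v₁ v₂ := by
    by_contra hc
    exact hnc ⟨hx'1, hx'2, hc⟩
  have hxseg : x ∈ seg G v N₁ x y \ {x'} := ⟨x_mem_seg, Ne.symm hx'x⟩
  have hyseg : y ∈ seg G v N₁ x y \ {x'} := ⟨y_mem_seg, Ne.symm hx'y⟩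
  set U : Set (V ⊕ Unit) := {s | Chain (H) (seg G v N₁ x y \ {x'}) x s} with hU
  have hyU : y ∉ U := hnxy
  set W : Set (V ⊕ Unit) := sA G v N₁ x ∪ U with hW
  have hxU : x ∈ U := Relation.ReflTransGen.refl
  have hclosure : ∀ p q, p ∈ W → (H).Adj p q → q ∈ {w | w ≠ x'} → q ∈ W := by
    intro p q hp hadj hq
    by_cases hqx : q = x
    · exact hqx ▸ Or.inr hxU
    · rcases hp with hpA | hpU
      · exact Or.inl (sA_adj_closed hpA hadj hqx)
      · -- p ∈ U
        have hpmem : x = p ∨ p ∈ seg G v N₁ x y \ {x'} := hpU.right_mem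
        rcases hpmem with rfl | hpseg
        · -- p = x
          rcases node_P1 h2c hN₁sub hN₁ hN₂ hx hqx with hqA | hqB
          · exact Or.inl hqA
          · by_cases hqy : q = y
            · subst hqy
              exact absurd (Chain.single hadj hxseg hyseg) hyU
            · rcases node_P1 h2c hN₁sub hN₁ hN₂ hy hqy with hqA' | hqB'
              · exact Or.inr (Chain.single hadj hxseg ⟨Or.inl ⟨hqB, hqA'⟩, hq⟩)
              · exact absurd (sA_adj_closed hxy hadj hqy) (fun hc => node_disj hy hc hqB')
        · rcases hpseg.1 with hpint | hpxy
          · -- p interior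
            by_cases hqy : q = y
            · subst hqy
              exact absurd (hpU.tail hadj hpseg hyseg) hyU
            · have hqB : q ∈ sB G v N₁ x := sB_adj_closed hpint.1 hadj hqx
              have hqA : q ∈ sA G v N₁ y := sA_adj_closed hpint.2 hadj hqy
              exact Or.inr (hpU.tail hadj hpseg ⟨Or.inl ⟨hqB, hqA⟩, hq⟩)
          · rcases hpxy with rfl | rfl
            · -- p = x again
              rcases node_P1 h2c hN₁sub hN₁ hN₂ hx hqx with hqA | hqB
              · exact Or.inl hqA
              · by_cases hqy : q = y
                · subst hqy
                  exact absurd (Chain.single hadj hxseg hyseg) hyU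
                · rcases node_P1 h2c hN₁sub hN₁ hN₂ hy hqy with hqA' | hqB'
                  · exact Or.inr (Chain.single hadj hxseg ⟨Or.inl ⟨hqB, hqA'⟩, hq⟩)
                  · exact absurd (sA_adj_closed hxy hadj hqy) (fun hc => node_disj hy hc hqB')
            · exact absurd hpU hyU
  have hxx' : x ≠ x' := Ne.symm hx'x
  have hchx2 : Chain (H) {w | w ≠ x'} x v₂ :=
    (noncut_chain h2c hN₁sub hN₁ hN₂ hx'1 hx'2 hch12 hxx').trans hch12
  have hres := chain_strengthen' hchx2 (Or.inr hxU) hclosure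
  rcases hres.2 with hxv2' | hv2W
  · exact hxv2 hxv2'
  · rcases hv2W with hv2A | hv2U
    · exact v2_not_sA hx hv2A
    · rcases hv2U.right_mem with hxv2' | hv2seg
      · exact hxv2 hxv2'
      · rcases hv2seg.1 with hint | hxy'
        · exact v2_not_sA hy hint.2
        · rcases hxy' with h | h
          · exact hxv2 h.symm
          · exact hyU (h ▸ hv2U)

end
end SplitProof
namespace SplitProof
open Sum ChainLib
section
variable {V : Type*} {G : SimpleGraph V} {v : V} {N₁ : Set V}

local notation "H" => splitVertex G v N₁
local notation "v₁" => (inl v : V ⊕ Unit)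
local notation "v₂" => (inr () : V ⊕ Unit)

lemma mem_seg_cases {x y z : V ⊕ Unit} (hz : z ∈ seg G v N₁ x y) :
    z ∈ sB G v N₁ x ∩ sA G v N₁ y ∨ z = x ∨ z = y := by
  rcases hz with h | h
  · exact Or.inl h
  · rcases h with h | h
    · exact Or.inr (Or.inl h)
    · exact Or.inr (Or.inr h)

variable (h2c : TwoConnectedGraph G) (hN₁sub : N₁ ⊆ G.neighborSet v)
  (hN₁ : N₁.Nonempty) (hN₂ : (G.neighborSet v \ N₁).Nonempty)

include h2c hN₁sub hN₁ hN₂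

lemma seg_nocut {x y : V ⊕ Unit} (hx : nodeP G v N₁ x) (hy : nodeP G v N₁ y)
    (hxy : x ∈ sA G v N₁ y)
    (hcons : ∀ z, cutP G v N₁ z → z ∈ sB G v N₁ x → z ∈ sA G v N₁ y → False) :
    NoCutSet (H) (seg G v N₁ x y) := by
  have hxney : x ≠ y := hxy.1
  have haux : ∀ a ∈ seg G v N₁ x y, Chain (H) (seg G v N₁ x y) a y := by
    intro a ha
    rcases mem_seg_cases ha with hint | rfl | rfl
    · refine (seg_chain_right hy hint).mono ?_
      rintro s (hs | hs)
      · exact Or.inl hs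
      · exact hs ▸ y_mem_seg
    · exact seg_chain_xy h2c hN₁sub hN₁ hN₂ hx hy hxy
    · exact Relation.ReflTransGen.refl
  constructor
  · refine ChainLib.connected_induce_iff.mpr ⟨⟨x, x_mem_seg⟩, ?_⟩
    intro a ha b hb
    exact (haux a ha).trans (haux b hb).symm
  · rintro ⟨x0, hx0⟩
    apply ChainLib.induce_induce_connected_iff.mpr
    show (seg G v N₁ x y \ {x0}).Nonempty ∧
        ∀ a ∈ seg G v N₁ x y \ {x0}, ∀ b ∈ seg G v N₁ x y \ {x0},
          Chain (H) (seg G v N₁ x y \ {x0}) a b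
    have hx0' := hx0
    clear hx0
    rcases mem_seg_cases hx0' with hint | heq | heq
    rotate_left
    · rw [heq]
      -- deleting x
      have haux2 : ∀ a ∈ seg G v N₁ x y \ {x}, Chain (H) (seg G v N₁ x y \ {x}) a y := by
        intro a ha
        rcases mem_seg_cases ha.1 with hint' | rfl | rfl
        · refine (seg_chain_right hy hint').mono ?_
          rintro s (hs | hs)
          · exact ⟨Or.inl hs, hs.1.1⟩
          · have hsy : s = y := hs
            subst hsy
            exact ⟨y_mem_seg, Ne.symm hxney⟩
        · exact absurd rfl ha.2
        · exact Relation.ReflTransGen.refl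
      refine ⟨⟨y, y_mem_seg, Ne.symm hxney⟩, ?_⟩
      intro a ha b hb
      exact (haux2 a ha).trans (haux2 b hb).symm
    · rw [heq]
      -- deleting y
      have haux2 : ∀ a ∈ seg G v N₁ x y \ {y}, Chain (H) (seg G v N₁ x y \ {y}) a x := by
        intro a ha
        rcases mem_seg_cases ha.1 with hint' | rfl | rfl
        · refine (seg_chain_left hx hint').mono ?_
          rintro s (hs | hs)
          · exact ⟨Or.inl hs, hs.2.1⟩
          · have hsx : s = x := hs
            subst hsx
            exact ⟨x_mem_seg, hxney⟩
        · exact Relation.ReflTransGen.refl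
        · exact absurd rfl ha.2
      refine ⟨⟨x, x_mem_seg, hxney⟩, ?_⟩
      intro a ha b hb
      exact (haux2 a ha).trans (haux2 b hb).symm
    · -- interior deletion
      have hnc : ¬ cutP G v N₁ x0 := fun hc => hcons _ hc hint.1 hint.2
      have haux2 : ∀ a ∈ seg G v N₁ x y \ {x0}, Chain (H) (seg G v N₁ x y \ {x0}) a x := by
        intro a ha
        rcases mem_seg_cases ha.1 with hint' | rfl | rfl
        · obtain ⟨t, ht, hch⟩ :=
            seg_interior_escape h2c hN₁sub hN₁ hN₂ hx hy hint hnc hint' ha.2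
          rcases ht with rfl | rfl
          · exact hch
          · exact hch.trans (seg_xy_avoid h2c hN₁sub hN₁ hN₂ hx hy hxy hint hnc).symm
        · exact Relation.ReflTransGen.refl
        · exact (seg_xy_avoid h2c hN₁sub hN₁ hN₂ hx hy hxy hint hnc).symm
      refine ⟨⟨x, x_mem_seg, Ne.symm hint.1.1⟩, ?_⟩
      intro a ha b hb
      exact (haux2 a ha).trans (haux2 b hb).symm

omit h2c hN₁sub hN₁ hN₂ in
lemma C_two_elems {C : Set (V ⊕ Unit)} (hC : NoCutSet (H) C) :
    ∃ a b, a ∈ C ∧ b ∈ C ∧ a ≠ b := by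
  obtain ⟨⟨c0, hc0⟩, -⟩ := ChainLib.connected_induce_iff.mp hC.1
  obtain ⟨⟨c1, hc1⟩, -⟩ := ChainLib.induce_induce_connected_iff.mp (hC.2 ⟨c0, hc0⟩)
  exact ⟨c1, c0, hc1.1, hc0, fun h => hc1.2 h⟩

lemma subset_side {C : Set (V ⊕ Unit)} (hC : NoCutSet (H) C) {x : V ⊕ Unit}
    (hx : nodeP G v N₁ x) :
    C ⊆ sA G v N₁ x ∪ {x} ∨ C ⊆ sB G v N₁ x ∪ {x} := by
  by_cases hxC : x ∈ C
  · obtain ⟨⟨c0, hc0⟩, hpairs⟩ := ChainLib.induce_induce_connected_iff.mp (hC.2 ⟨x, hxC⟩)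
    have hsub : C \ {x} ⊆ {w | w ≠ x} := fun s hs => hs.2
    rcases node_P1 h2c hN₁sub hN₁ hN₂ hx hc0.2 with hc0A | hc0B
    · left
      intro z hz
      by_cases hzx : z = x
      · exact Or.inr hzx
      · exact Or.inl ⟨hzx, hc0A.2.trans ((hpairs c0 hc0 z ⟨hz, hzx⟩).mono hsub)⟩
    · right
      intro z hz
      by_cases hzx : z = x
      · exact Or.inr hzx
      · exact Or.inl ⟨hzx, hc0B.2.trans ((hpairs c0 hc0 z ⟨hz, hzx⟩).mono hsub)⟩
  · obtain ⟨⟨c0, hc0⟩, hpairs⟩ := ChainLib.connected_induce_iff.mp hC.1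
    have hsub : C ⊆ {w | w ≠ x} := fun s hs h => hxC (h ▸ hs)
    have hc0x : c0 ≠ x := hsub hc0
    rcases node_P1 h2c hN₁sub hN₁ hN₂ hx hc0x with hc0A | hc0B
    · left
      intro z hz
      exact Or.inl ⟨hsub hz, hc0A.2.trans ((hpairs c0 hc0 z hz).mono hsub)⟩
    · right
      intro z hz
      exact Or.inl ⟨hsub hz, hc0B.2.trans ((hpairs c0 hc0 z hz).mono hsub)⟩

end
end SplitProof
namespace SplitProof
open Sum ChainLib

variable {V : Type*}

/-- the sequence of nodes `v₁, c₁, …, c_m, v₂`. -/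
def chainNodes (G : SimpleGraph V) (v : V) (N₁ : Set V) (m : ℕ)
    (e : Fin m → {x : V ⊕ Unit // cutP G v N₁ x}) : ℕ → V ⊕ Unit := fun i =>
  if h : 1 ≤ i ∧ i ≤ m then (e ⟨i - 1, by omega⟩).val
  else if i = 0 then inl v else inr ()

lemma chainNodes_zero {G : SimpleGraph V} {v : V} {N₁ : Set V} {m : ℕ}
    {e : Fin m → {x : V ⊕ Unit // cutP G v N₁ x}} :
    chainNodes G v N₁ m e 0 = inl v := by
  simp [chainNodes]

lemma chainNodes_mid {G : SimpleGraph V} {v : V} {N₁ : Set V} {m : ℕ}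
    {e : Fin m → {x : V ⊕ Unit // cutP G v N₁ x}} {i : ℕ} (h1 : 1 ≤ i) (h2 : i ≤ m) :
    chainNodes G v N₁ m e i = (e ⟨i - 1, by omega⟩).val := by
  rw [chainNodes, dif_pos ⟨h1, h2⟩]

lemma chainNodes_last {G : SimpleGraph V} {v : V} {N₁ : Set V} {m : ℕ}
    {e : Fin m → {x : V ⊕ Unit // cutP G v N₁ x}} {i : ℕ} (h : m < i) :
    chainNodes G v N₁ m e i = inr () := by
  rw [chainNodes, dif_neg (by omega), if_neg (by omega)]

end SplitProof


/-- Let `G` be a 2-connected graph, `v` a vertex of `G`, and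
`(E₁, E₂)` a partition of the edges incident to `v` into two nonempty parts
(encoded by the nonempty set of neighbours `N₁ ⊆ N(v)` with nonempty
complement `N(v) \ N₁`).  Let `G′` be obtained from `G` by splitting `v` into
`v₁` and `v₂`, where `vᵢ` keeps the edges of `Eᵢ`.  Then the block structure
of `G′` is a chain: its blocks can be ordered `B₀, …, B_{k-1}` so that each
`Bᵢ` has two distinguished distinct vertices `wᵢ, wᵢ′` with `w₀ = v₁`,
`w_{k-1}′ = v₂` and `wᵢ′ = w_{i+1}`, the cut vertices of `G′` being exactly
`w₁, …, w_{k-1}`. -/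
theorem splitVertex_block_chain {V : Type*} (G : SimpleGraph V) (v : V)
    (N₁ : Set V) (hN₁sub : N₁ ⊆ G.neighborSet v)
    (hN₁ : N₁.Nonempty) (hN₂ : (G.neighborSet v \ N₁).Nonempty)
    (h2c : TwoConnectedGraph G) :
    ∃ (k : ℕ) (_ : 1 ≤ k) (B : Fin k → Set (V ⊕ Unit))
      (w w' : Fin k → (V ⊕ Unit)),
      (∀ i, IsBlock (splitVertex G v N₁) (B i)) ∧
      (∀ C : Set (V ⊕ Unit), IsBlock (splitVertex G v N₁) C → ∃ i, C = B i) ∧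
      (∀ i j, i ≠ j → B i ≠ B j) ∧
      (∀ i, w i ∈ B i ∧ w' i ∈ B i ∧ w i ≠ w' i) ∧
      w ⟨0, by omega⟩ = Sum.inl v ∧
      w' ⟨k - 1, by omega⟩ = Sum.inr () ∧
      (∀ i : Fin k, ∀ h : i.val + 1 < k, w' i = w ⟨i.val + 1, h⟩) ∧
      (∀ x : V ⊕ Unit,
        IsCutVertex (splitVertex G v N₁) x ↔ ∃ i : Fin k, 0 < i.val ∧ x = w i) := by

  classical
  open SplitProof Sum ChainLib in
  have hfinV : Finite V := by
    by_contra h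
    rw [not_finite_iff_infinite] at h
    have := Nat.card_eq_zero_of_infinite (α := V)
    have h3 := h2c.1
    omega
  letI : Fintype {x : V ⊕ Unit // cutP G v N₁ x} := Fintype.ofFinite _
  set CS := {x : V ⊕ Unit // cutP G v N₁ x} with hCS
  have hnode_cut : ∀ x : V ⊕ Unit, cutP G v N₁ x → nodeP G v N₁ x :=
    fun x hx => Or.inr (Or.inr hx)
  let r : CS → CS → Prop := fun a b => a.val ∈ sA G v N₁ b.val
  haveI : IsTrichotomous CS r := by
    constructor
    intro a b hnab hnba
    by_contra hab
    · have hab' : a.val ≠ b.val := fun h => hab (Subtype.ext h)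
      rcases SplitProof.lt_total' h2c hN₁sub hN₁ hN₂ (hnode_cut _ a.2) (hnode_cut _ b.2)
        hab' with h | h
      · exact hnab h
      · exact hnba h
  haveI : IsIrrefl CS r := ⟨fun a h => h.1 rfl⟩
  haveI : IsTrans CS r := ⟨fun a b c hab hbc =>
    SplitProof.lt_trans' h2c hN₁sub hN₁ hN₂ (hnode_cut _ b.2) (hnode_cut _ c.2) hab hbc⟩
  haveI hSTO : IsStrictTotalOrder CS r := {}
  letI : LinearOrder CS := linearOrderOfSTO r
  set m := Fintype.card CS with hm
  let eIso : Fin m ≃o CS := Fintype.orderIsoFinOfCardEq CS rfl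
  let e : Fin m → CS := fun i => eIso i
  have hlt_e : ∀ i j : Fin m, i < j → r (e i) (e j) := by
    intro i j hij
    exact eIso.lt_iff_lt.mpr hij
  set n : ℕ → V ⊕ Unit := SplitProof.chainNodes G v N₁ m e with hn
  have hn0 : n 0 = inl v := SplitProof.chainNodes_zero
  have hnlast : n (m + 1) = inr () := SplitProof.chainNodes_last (by omega)
  have hncut : ∀ i, 1 ≤ i → i ≤ m → cutP G v N₁ (n i) := by
    intro i h1 h2
    rw [hn, SplitProof.chainNodes_mid h1 h2]
    exact (e _).2
  have hnnode : ∀ i, i ≤ m + 1 → nodeP G v N₁ (n i) := by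
    intro i hi
    by_cases h0 : i = 0
    · subst h0; rw [hn0]; exact Or.inl rfl
    · by_cases hle : i ≤ m
      · exact hnode_cut _ (hncut i (by omega) hle)
      · have : i = m + 1 := by omega
        subst this; rw [hnlast]; exact Or.inr (Or.inl rfl)
  have hn_ne_v2 : ∀ i, i ≤ m → n i ≠ inr () := by
    intro i hi
    by_cases h0 : i = 0
    · subst h0; rw [hn0]; exact fun h => by simp at h
    · exact (hncut i (by omega) hi).2.1
  have hnsurj : ∀ z, cutP G v N₁ z → ∃ i, 1 ≤ i ∧ i ≤ m ∧ n i = z := by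
    intro z hz
    let j : Fin m := eIso.symm ⟨z, hz⟩
    refine ⟨j.val + 1, by omega, by omega, ?_⟩
    rw [hn, SplitProof.chainNodes_mid (by omega) (by omega)]
    have : (⟨j.val + 1 - 1, by omega⟩ : Fin m) = j := by
      apply Fin.ext; simp
    rw [this]
    show (eIso j).val = z
    simp [j]
  have ordKey : ∀ i j, i < j → j ≤ m + 1 → n i ∈ sA G v N₁ (n j) := by
    intro i j hij hj
    by_cases hjm : j ≤ m
    · by_cases hi0 : i = 0
      · subst hi0
        rw [hn0]
        exact ⟨Ne.symm (hncut j (by omega) hjm).1, Relation.ReflTransGen.refl⟩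
      · have h1 : 1 ≤ i := by omega
        have hmid_i := SplitProof.chainNodes_mid (e := e) h1 (by omega)
        have hmid_j := SplitProof.chainNodes_mid (e := e) (i := j) (by omega) hjm
        rw [hn, hmid_i, hmid_j]
        exact hlt_e _ _ (by simp [Fin.lt_def]; omega)
    · have hj' : j = m + 1 := by omega
      subst hj'
      rw [hnlast]
      exact SplitProof.sA_v2 h2c hN₁sub hN₁ hN₂ (hn_ne_v2 i (by omega))
  have hcons : ∀ i, i ≤ m → ∀ z, cutP G v N₁ z → z ∈ sB G v N₁ (n i) →
      z ∈ sA G v N₁ (n (i + 1)) → False := by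
    intro i hi z hz hzB hzA
    obtain ⟨j, hj1, hjm, rfl⟩ := hnsurj z hz
    rcases lt_trichotomy j i with h | h | h
    · exact SplitProof.node_disj (hnnode i (by omega)) (ordKey j i h (by omega)) hzB
    · exact hzB.1 (h ▸ rfl)
    · rcases Nat.lt_or_ge (i + 1) j with h' | h'
      · exact SplitProof.lt_asymm' h2c hN₁sub hN₁ hN₂ (hnode_cut _ hz)
          (hnnode (i+1) (by omega)) hzA (ordKey (i+1) j h' (by omega))
      · have : j = i + 1 := by omega
        exact hzA.1 (this ▸ rfl)
  -- the blocks
  have hBnocut : ∀ i : Fin (m + 1),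
      NoCutSet (splitVertex G v N₁) (SplitProof.seg G v N₁ (n i.val) (n (i.val + 1))) := by
    intro i
    have hi := i.isLt
    exact SplitProof.seg_nocut h2c hN₁sub hN₁ hN₂ (hnnode i.val (by omega))
      (hnnode (i.val + 1) (by omega)) (ordKey i.val (i.val + 1) (by omega) (by omega))
      (hcons i.val (by omega))
  have hBsub : ∀ C : Set (V ⊕ Unit), NoCutSet (splitVertex G v N₁) C →
      ∃ i : Fin (m + 1), C ⊆ SplitProof.seg G v N₁ (n i.val) (n (i.val + 1)) := by
    intro C hC
    obtain ⟨a, b, haC, hbC, hab⟩ := SplitProof.C_two_elems hC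
    let Q : ℕ → Prop := fun j => C ⊆ sA G v N₁ (n j) ∪ {n j}
    have hQlast : Q (m + 1) := by
      intro z hz
      by_cases hzv : z = inr ()
      · right; rw [hnlast]; exact hzv
      · left; rw [hnlast]; exact SplitProof.sA_v2 h2c hN₁sub hN₁ hN₂ hzv
    haveI := Classical.decPred Q
    have hQex : ∃ j, Q j := ⟨m + 1, hQlast⟩
    have hQ0 : Q (Nat.find hQex) := Nat.find_spec hQex
    have hj0le : Nat.find hQex ≤ m + 1 := Nat.find_le hQlast
    set j0 := Nat.find hQex with hj0
    have hj0pos : j0 ≠ 0 := by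
      intro h0
      rw [h0] at hQ0
      have ha' := hQ0 haC
      have hb' := hQ0 hbC
      rw [hn0, SplitProof.sA_v1_empty] at ha' hb'
      rcases ha' with h | h
      · exact h
      · rcases hb' with h' | h'
        · exact h'
        · exact hab (h.trans h'.symm)
    have hnotQ : ¬ Q (j0 - 1) := Nat.find_min hQex (by omega)
    have hBside : C ⊆ sB G v N₁ (n (j0 - 1)) ∪ {n (j0 - 1)} := by
      rcases SplitProof.subset_side h2c hN₁sub hN₁ hN₂ hC (hnnode (j0 - 1) (by omega)) with
        h | h
      · exact absurd h hnotQ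
      · exact h
    have hidx : (j0 - 1) + 1 = j0 := by omega
    refine ⟨⟨j0 - 1, by omega⟩, ?_⟩
    intro z hz
    have hA := hQ0 hz
    have hB := hBside hz
    show z ∈ SplitProof.seg G v N₁ (n (j0 - 1)) (n ((j0 - 1) + 1))
    rw [hidx]
    rcases hB with hzB | hzB
    · rcases hA with hzA | hzA
      · exact Or.inl ⟨hzB, hzA⟩
      · exact Or.inr (Or.inr hzA)
    · exact Or.inr (Or.inl hzB)
  have hBne : ∀ i j : Fin (m + 1),
      SplitProof.seg G v N₁ (n i.val) (n (i.val + 1)) ⊆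
        SplitProof.seg G v N₁ (n j.val) (n (j.val + 1)) → i = j := by
    intro i j hsub
    by_contra hij
    have hi := i.isLt
    have hj := j.isLt
    rcases lt_or_gt_of_ne (fun h : i.val = j.val => hij (Fin.ext h)) with h | h
    · rcases SplitProof.mem_seg_cases (hsub SplitProof.x_mem_seg) with hint | heq | heq
      · exact SplitProof.node_disj (hnnode j.val (by omega))
          (ordKey i.val j.val h (by omega)) hint.1
      · exact (ordKey i.val j.val h (by omega)).1 heq
      · exact (ordKey i.val (j.val + 1) (by omega) (by omega)).1 heq
    · rcases SplitProof.mem_seg_cases (hsub SplitProof.y_mem_seg) with hint | heq | heq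
      · exact SplitProof.lt_asymm' h2c hN₁sub hN₁ hN₂ (hnnode (i.val + 1) (by omega))
          (hnnode (j.val + 1) (by omega)) hint.2
          (ordKey (j.val + 1) (i.val + 1) (by omega) (by omega))
      · exact (ordKey j.val (i.val + 1) (by omega) (by omega)).1 heq.symm
      · exact (ordKey (j.val + 1) (i.val + 1) (by omega) (by omega)).1 heq.symm
  refine ⟨m + 1, by omega, fun i => SplitProof.seg G v N₁ (n i.val) (n (i.val + 1)),
    fun i => n i.val, fun i => n (i.val + 1), ?_, ?_, ?_, ?_, ?_, ?_, ?_, ?_⟩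
  · intro i
    refine ⟨hBnocut i, ?_⟩
    intro B' hsub hB'
    obtain ⟨j, hj⟩ := hBsub B' hB'
    have hij := hBne i j (hsub.trans hj)
    rw [← hij] at hj
    exact Set.Subset.antisymm hj hsub
  · intro C hC
    obtain ⟨i, hi⟩ := hBsub C hC.1
    exact ⟨i, (hC.2 _ hi (hBnocut i)).symm⟩
  · intro i j hij h
    exact hij (hBne i j (le_of_eq h))
  · intro i
    have hi := i.isLt
    exact ⟨SplitProof.x_mem_seg, SplitProof.y_mem_seg,
      (ordKey i.val (i.val + 1) (by omega) (by omega)).1⟩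
  · exact hn0
  · show n ((m + 1 - 1) + 1) = inr ()
    rw [show (m + 1 - 1) + 1 = m + 1 by omega]
    exact hnlast
  · intro i h
    rfl
  · intro x
    constructor
    · intro hcut
      have hcp := (SplitProof.cut_iff h2c hN₁sub hN₁ hN₂ x).mp hcut
      obtain ⟨j, hj1, hjm, hjz⟩ := hnsurj x hcp
      exact ⟨⟨j, by omega⟩, by exact hj1, hjz.symm⟩
    · rintro ⟨i, hi0, rfl⟩
      have hi := i.isLt
      exact (SplitProof.cut_iff h2c hN₁sub hN₁ hN₂ _).mpr
        (hncut i.val (by omega) (by omega))
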